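/- Let T be a spanning tree of the bipartite graph G ⊆ K_{m,n} with neighborhood sets T_i ⊆ [n] for left vertices. Then the left degree vector (|T_1|−1,…,|T_m|−1) is a G-draconian sequence: ∑_i(|T_i|−1) = n−1 and for any subset {i_1 < ⋯ < i_k} ⊆ [m], |T_{i_1} ∪ ⋯ ∪ T_{i_k}| ≥ (|T_{i_1}|−1)+⋯+(|T_{i_k}|−1)+1. -/

import Mathlib

open SimpleGraph Sum Finset Walk

private lemma color_walk {V : Type*} {H : SimpleGraph V} (c : V → ZMod 2)
    (hc : ∀ a b, H.Adj a b → c b = c a + 1) {a b : V} (p : H.Walk a b) :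
    c b = c a + p.length := by
  induction p with
  | nil => simp
  | @cons u v w h p ih =>
    rw [Walk.length_cons]
    push_cast
    rw [ih, hc u v h]
    ring

private lemma dist_le_of_mem_support {V : Type*} [DecidableEq V] {H : SimpleGraph V} {w r : V}
    (p : H.Walk w r) {u : V} (hu : u ∈ p.support) : H.dist u r ≤ p.length := by
  have h := SimpleGraph.dist_le (p.dropUntil u hu)
  have h2 : (p.takeUntil u hu).length + (p.dropUntil u hu).length = p.length := by
    rw [← Walk.length_append, Walk.take_spec]
  omega

private lemma parent_unique {V : Type*} [DecidableEq V] {H : SimpleGraph V} (ht : H.IsTree) {r v w w' : V}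
    (hvw : H.Adj v w) (hvw' : H.Adj v w')
    (hd : H.dist v r = H.dist w r + 1) (hd' : H.dist v r = H.dist w' r + 1) :
    w = w' := by
  have hconn := ht.isConnected
  obtain ⟨p, hp⟩ := hconn.exists_walk_length_eq_dist w r
  obtain ⟨p', hp'⟩ := hconn.exists_walk_length_eq_dist w' r
  have hpth : p.IsPath := p.isPath_of_length_eq_dist hp
  have hpth' : p'.IsPath := p'.isPath_of_length_eq_dist hp'
  have hv : v ∉ p.support := fun h => by
    have := dist_le_of_mem_support p h; omega
  have hv' : v ∉ p'.support := fun h => by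
    have := dist_le_of_mem_support p' h; omega
  have h1 : (Walk.cons hvw p).IsPath := hpth.cons hv
  have h2 : (Walk.cons hvw' p').IsPath := hpth'.cons hv'
  obtain ⟨q, _, hq⟩ := ht.existsUnique_path v r
  have e1 := hq _ h1
  have e2 := hq _ h2
  have e3 : Walk.cons hvw p = Walk.cons hvw' p' := e1.trans e2.symm
  have e4 : (Walk.cons hvw p).getVert 1 = (Walk.cons hvw' p').getVert 1 := by rw [e3]
  simpa using e4

private lemma adj_dist_cases {V : Type*} {H : SimpleGraph V} (ht : H.IsTree)
    (c : V → ZMod 2) (hc : ∀ a b, H.Adj a b → c b = c a + 1) {r v w : V}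
    (hvw : H.Adj v w) :
    H.dist v r = H.dist w r + 1 ∨ H.dist w r = H.dist v r + 1 := by
  have hconn := ht.isConnected
  have hd1 : H.dist v w ≤ 1 := by
    simpa using SimpleGraph.dist_le (Walk.cons hvw Walk.nil)
  have hd1' : H.dist w v ≤ 1 := by
    simpa using SimpleGraph.dist_le (Walk.cons hvw.symm Walk.nil)
  have h1 : H.dist v r ≤ H.dist w r + 1 := by
    have := hconn.dist_triangle (u := v) (v := w) (w := r)
    omega
  have h2 : H.dist w r ≤ H.dist v r + 1 := by
    have := hconn.dist_triangle (u := w) (v := v) (w := r)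
    omega
  have hne : H.dist v r ≠ H.dist w r := by
    intro he
    obtain ⟨p, hp⟩ := hconn.exists_walk_length_eq_dist v r
    obtain ⟨q, hq⟩ := hconn.exists_walk_length_eq_dist w r
    have e1 := color_walk c hc p
    have e2 := color_walk c hc q
    rw [hp, he] at e1
    rw [hq] at e2
    have e3 : c v = c w := by
      have := e1.symm.trans e2
      exact add_right_cancel this
    have := hc v w hvw
    rw [e3] at this
    exact one_ne_zero (left_eq_add.mp this)
  omega
theorem left_degree_vector_draconian (m n : ℕ)
    (G T : SimpleGraph (Fin m ⊕ Fin n))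
    (hGbip : (∀ i j : Fin m, ¬ G.Adj (inl i) (inl j)) ∧
             (∀ i j : Fin n, ¬ G.Adj (inr i) (inr j)))
    (hsub : T ≤ G) (htree : T.IsTree) :
    (∑ i : Fin m, (({j : Fin n | T.Adj (inl i) (inr j)}.ncard : ℤ) - 1)
        = (n : ℤ) - 1) ∧
    ∀ S : Finset (Fin m), S.Nonempty →
      (∑ i ∈ S, (({j : Fin n | T.Adj (inl i) (inr j)}.ncard : ℤ) - 1)) + 1
        ≤ ((⋃ i ∈ (S : Set (Fin m)), {j : Fin n | T.Adj (inl i) (inr j)}).ncard : ℤ) := by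
  classical
  obtain ⟨hG1, hG2⟩ := hGbip
  have hconn := htree.isConnected
  -- the two-coloring
  set c : Fin m ⊕ Fin n → ZMod 2 := Sum.elim (fun _ => 0) (fun _ => 1) with hc_def
  have hc : ∀ a b, T.Adj a b → c b = c a + 1 := by
    intro a b hab
    cases a with
    | inl i => cases b with
      | inl j => exact absurd (hsub hab) (hG1 i j)
      | inr j => simp [c]
    | inr i => cases b with
      | inl j => simp [c]; decide
      | inr j => exact absurd (hsub hab) (hG2 i j)
  set Ti : Fin m → Finset (Fin n) := fun i => univ.filter fun j => T.Adj (inl i) (inr j)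
    with hTi_def
  have hmemTi : ∀ i j, j ∈ Ti i ↔ T.Adj (inl i) (inr j) := by
    intro i j; simp [hTi_def]
  have hncard : ∀ i, ({j : Fin n | T.Adj (inl i) (inr j)}.ncard) = (Ti i).card := by
    intro i
    rw [Set.ncard_eq_toFinset_card']
    apply Finset.card_nbij id
    · intro j hj
      rw [id, Finset.mem_coe, hmemTi]
      simpa using hj
    · exact Function.Injective.injOn (fun a b h => h)
    · intro j hj
      refine ⟨j, by simpa using (hmemTi i j).mp hj, rfl⟩
  have hsum : ∀ S : Finset (Fin m), ∑ i ∈ S, (Ti i).card = (S.sigma Ti).card :=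
    fun S => (Finset.card_sigma S Ti).symm
  -- part 1 : count all edges
  have hcard_univ : ((univ : Finset (Fin m)).sigma Ti).card = T.edgeFinset.card := by
    apply Finset.card_bij (fun p _ => s(inl p.1, inr p.2))
    · intro p hp
      rw [mem_edgeFinset]
      exact (hmemTi p.1 p.2).mp (mem_sigma.mp hp).2
    · intro p hp q hq h
      rw [Sym2.eq_iff] at h
      rcases h with ⟨h1, h2⟩ | ⟨h1, h2⟩
      · obtain ⟨p1, p2⟩ := p
        obtain ⟨q1, q2⟩ := q
        simp only at h1 h2
        rw [inl.injEq] at h1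
        rw [inr.injEq] at h2
        subst h1; subst h2; rfl
      · exact absurd h1 (Sum.inl_ne_inr)
    · intro e he
      rw [mem_edgeFinset] at he
      induction e with
      | _ u v =>
        rw [SimpleGraph.mem_edgeSet] at he
        cases u with
        | inl i => cases v with
          | inl j => exact absurd (hsub he) (hG1 i j)
          | inr j =>
            exact ⟨⟨i, j⟩, mem_sigma.mpr ⟨mem_univ _, (hmemTi i j).mpr he⟩, rfl⟩
        | inr j => cases v with
          | inl i =>
            exact ⟨⟨i, j⟩, mem_sigma.mpr ⟨mem_univ _, (hmemTi i j).mpr he.symm⟩,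
              Sym2.eq_swap⟩
          | inr i => exact absurd (hsub he) (hG2 j i)
  have hedge : T.edgeFinset.card + 1 = m + n := by
    have := htree.card_edgeFinset
    simpa [Fintype.card_sum] using this
  have hsumZ : ∀ S : Finset (Fin m),
      ∑ i ∈ S, (({j : Fin n | T.Adj (inl i) (inr j)}.ncard : ℤ) - 1)
        = ((S.sigma Ti).card : ℤ) - S.card := by
    intro S
    rw [Finset.sum_sub_distrib, Finset.sum_const, ← hsum S]
    push_cast [hncard]
    ring
  constructor
  · rw [hsumZ univ, hcard_univ]
    have : (T.edgeFinset.card : ℤ) + 1 = m + n := by exact_mod_cast hedge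
    simp only [Finset.card_univ, Fintype.card_fin]
    linarith
  -- part 2
  intro S hS
  obtain ⟨i₀, hi₀⟩ := hS
  set r : Fin m ⊕ Fin n := inl i₀ with hr_def
  set U : Finset (Fin n) := S.biUnion Ti with hU_def
  have hUset : (⋃ i ∈ (S : Set (Fin m)), {j : Fin n | T.Adj (inl i) (inr j)}) = ↑U := by
    ext j
    simp [hU_def, hmemTi]
  rw [hUset, Set.ncard_coe_finset, hsumZ S]
  -- the key cardinality bound
  have hadj : ∀ p : (_ : Fin m) × Fin n, p ∈ S.sigma Ti → T.Adj (inl p.1) (inr p.2) :=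
    fun p hp => (hmemTi p.1 p.2).mp (mem_sigma.mp hp).2
  have key : (S.sigma Ti).card + 1 ≤ S.card + U.card := by
    have hle : (S.sigma Ti).card ≤ ((S.image inl ∪ U.image inr).erase r).card := by
      apply Finset.card_le_card_of_injOn
        (fun p => if T.dist (inr p.2) r < T.dist (inl p.1) r then inl p.1 else inr p.2)
      · intro p hp
        have hcases := adj_dist_cases htree c hc (r := r) (hadj p hp)
        by_cases h : T.dist (inr p.2) r < T.dist (inl p.1) r
        · simp only [if_pos h]
          refine Finset.mem_erase.mpr ⟨?_, Finset.mem_union_left _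
            (Finset.mem_image_of_mem _ (mem_sigma.mp hp).1)⟩
          intro hEq
          rw [hEq] at h
          simp [SimpleGraph.dist_self] at h
        · simp only [if_neg h]
          refine Finset.mem_erase.mpr ⟨Sum.inr_ne_inl, Finset.mem_union_right _
            (Finset.mem_image_of_mem _ ?_)⟩
          exact Finset.mem_biUnion.mpr ⟨p.1, (mem_sigma.mp hp).1, (mem_sigma.mp hp).2⟩
      · intro p hp q hq h
        have hpc := adj_dist_cases htree c hc (r := r) (hadj p hp)
        have hqc := adj_dist_cases htree c hc (r := r) (hadj q hq)
        obtain ⟨p1, p2⟩ := p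
        obtain ⟨q1, q2⟩ := q
        simp only at h hpc hqc ⊢
        split_ifs at h with h1 h2 h2
        all_goals first
        | exact absurd h Sum.inl_ne_inr
        | exact absurd h Sum.inr_ne_inl
        | · rw [inl.injEq] at h
            subst h
            have hd1 : T.dist (inl p1) r = T.dist (inr p2) r + 1 := by omega
            have hd2 : T.dist (inl p1) r = T.dist (inr q2) r + 1 := by omega
            have := parent_unique htree (hadj ⟨p1, p2⟩ hp) (hadj ⟨p1, q2⟩ hq) hd1 hd2
            rw [inr.injEq] at this
            subst this; rfl
        | · rw [inr.injEq] at h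
            subst h
            have hd1 : T.dist (inr p2) r = T.dist (inl p1) r + 1 := by omega
            have hd2 : T.dist (inr p2) r = T.dist (inl q1) r + 1 := by omega
            have := parent_unique htree (hadj ⟨p1, p2⟩ hp).symm (hadj ⟨q1, p2⟩ hq).symm hd1 hd2
            rw [inl.injEq] at this
            subst this; rfl
    have hdisj : Disjoint (S.image (inl : Fin m → Fin m ⊕ Fin n)) (U.image inr) := by
      rw [Finset.disjoint_left]
      rintro a ha ha'
      obtain ⟨x, -, rfl⟩ := Finset.mem_image.mp ha
      obtain ⟨y, -, hy⟩ := Finset.mem_image.mp ha'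
      exact Sum.inl_ne_inr hy.symm
    have hrmem : r ∈ S.image inl ∪ U.image inr :=
      Finset.mem_union_left _ (Finset.mem_image_of_mem _ hi₀)
    have hcarde : ((S.image inl ∪ U.image inr).erase r).card
        = S.card + U.card - 1 := by
      rw [Finset.card_erase_of_mem hrmem, Finset.card_union_of_disjoint hdisj,
        Finset.card_image_of_injective _ Sum.inl_injective,
        Finset.card_image_of_injective _ Sum.inr_injective]
    have hSpos : 1 ≤ S.card := Finset.card_pos.mpr ⟨i₀, hi₀⟩
    omega
  have hSle : (S.card : ℤ) ≥ 1 := by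
    exact_mod_cast Finset.card_pos.mpr ⟨i₀, hi₀⟩
  have : ((S.sigma Ti).card : ℤ) + 1 ≤ S.card + U.card := by exact_mod_cast key
  linarith
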